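/- Let d_1, …, d_m be positive integers. Then there exists a nonzero real polynomial ψ in the coefficients of m-tuples of polynomials (g_1,…,g_m) with g_j ∈ ℝ[x]_{d_j}, such that for every tuple g = (g_1,…,g_m) with deg g_j ≤ d_j: if ψ does not vanish at the coefficients of g, then C(g) = ∅. -/

import Mathlib

set_option maxHeartbeats 1000000

open MvPolynomial

noncomputable section

theorem eval_aeval' {σ τ : Type} (F : τ → MvPolynomial σ ℝ) (y : σ → ℝ) (q : MvPolynomial τ ℝ) :
    eval y (aeval F q) = eval (fun t => eval y (F t)) q := by
  induction q using MvPolynomial.induction_on with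
  | C a => simp [aeval_C]
  | add p q hp hq => simp only [map_add, hp, hq]
  | mul_X p i hp => simp only [map_mul, aeval_X, eval_X, eval_mul, hp]

theorem exists_annihilator {σ τ : Type} [Fintype σ] [Fintype τ] [DecidableEq τ]
    (h : Fintype.card σ < Fintype.card τ) (F : τ → MvPolynomial σ ℝ) :
    ∃ ψ : MvPolynomial τ ℝ, ψ ≠ 0 ∧ aeval F ψ = 0 := by
  classical
  set k := Fintype.card σ with hk
  set N := Fintype.card τ with hN
  set D := (Finset.univ.sup fun j => (F j).totalDegree) + 1 with hD
  have hFD : ∀ j, (F j).totalDegree ≤ D := fun j => by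
    exact le_trans (Finset.le_sup (f := fun j => (F j).totalDegree) (Finset.mem_univ j))
      (Nat.le_succ _)
  set t := (N * D + 1) ^ k + 1 with ht
  set r := N * t * D with hr
  -- the family of products
  set v : (τ → Fin (t + 1)) → MvPolynomial σ ℝ := fun α => ∏ j, F j ^ (α j : ℕ) with hv
  have hvmem : ∀ α, v α ∈ restrictDegree σ ℝ r := by
    intro α
    apply restrictTotalDegree_le_restrictDegree
    rw [mem_restrictTotalDegree]
    calc (v α).totalDegree ≤ ∑ j, (F j ^ (α j : ℕ)).totalDegree :=
          totalDegree_finset_prod _ _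
      _ ≤ ∑ _j : τ, t * D := by
          apply Finset.sum_le_sum
          intro j _
          calc (F j ^ (α j : ℕ)).totalDegree ≤ (α j : ℕ) * (F j).totalDegree :=
                totalDegree_pow _ _
            _ ≤ t * D := Nat.mul_le_mul (Nat.le_of_lt_succ (α j).2) (hFD j)
      _ = N * (t * D) := by rw [Finset.sum_const, Finset.card_univ, smul_eq_mul]
      _ = r := by rw [hr, Nat.mul_assoc]
  -- Fintype instance on the basis index set
  let s : Set (σ →₀ ℕ) := {n | ∀ i, n i ≤ r}
  let emb : s → (σ → Fin (r + 1)) := fun f i => ⟨f.1 i, Nat.lt_succ_of_le (f.2 i)⟩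
  have hembinj : Function.Injective emb := by
    intro a b hab
    apply Subtype.ext
    apply Finsupp.ext
    intro i
    have := congrFun hab i
    simpa [emb, Fin.ext_iff] using this
  have : Fintype s := Fintype.ofInjective emb hembinj
  have hfinrank : Module.finrank ℝ (restrictDegree σ ℝ r) ≤ (r + 1) ^ k := by
    have hb : Module.finrank ℝ (restrictDegree σ ℝ r) = Fintype.card s :=
      Module.finrank_eq_card_basis (basisRestrictSupport ℝ s)
    rw [hb]
    calc Fintype.card s ≤ Fintype.card (σ → Fin (r + 1)) :=
          Fintype.card_le_of_injective emb hembinj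
      _ = (r + 1) ^ k := by simp [Fintype.card_fun, hk]
  -- the count of the family
  have hcard : (r + 1) ^ k < Fintype.card (τ → Fin (t + 1)) := by
    have h1 : r + 1 ≤ (N * D + 1) * t := by
      have ht1 : 1 ≤ t := le_trans (Nat.one_le_iff_ne_zero.mpr (by positivity)) le_rfl
      calc r + 1 = N * t * D + 1 := rfl
        _ ≤ N * D * t + t := by
            have he : N * t * D = N * D * t := by ring
            omega
        _ = (N * D + 1) * t := by ring
    calc (r + 1) ^ k ≤ ((N * D + 1) * t) ^ k := Nat.pow_le_pow_left h1 k
      _ = (N * D + 1) ^ k * t ^ k := by rw [Nat.mul_pow]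
      _ < t * t ^ k := by
          apply Nat.mul_lt_mul_of_lt_of_le
          · exact Nat.lt_succ_of_le le_rfl
          · exact le_rfl
          · positivity
      _ = t ^ (k + 1) := by ring
      _ ≤ (t + 1) ^ (k + 1) := Nat.pow_le_pow_left (Nat.le_succ t) _
      _ ≤ (t + 1) ^ N := Nat.pow_le_pow_right (by omega) (by omega)
      _ = Fintype.card (τ → Fin (t + 1)) := by simp [Fintype.card_fun, hN]
  -- linear dependence
  have hnli : ¬ LinearIndependent ℝ v := by
    intro hli
    set v' : (τ → Fin (t + 1)) → restrictDegree σ ℝ r := fun α => ⟨v α, hvmem α⟩ with hv'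
    have hli' : LinearIndependent ℝ v' :=
      LinearIndependent.of_comp ((restrictDegree σ ℝ r).subtype) (by exact hli)
    have := hli'.fintype_card_le_finrank
    omega
  obtain ⟨c, hsum, α₀, hα₀⟩ := Fintype.not_linearIndependent_iff.mp hnli
  -- build ψ
  set toF : (τ → Fin (t + 1)) → (τ →₀ ℕ) :=
    fun α => Finsupp.equivFunOnFinite.symm (fun j => (α j : ℕ)) with htoF
  have htoFinj : Function.Injective toF := by
    intro a b hab
    funext j
    have := congrFun (congrArg (fun (f : τ →₀ ℕ) => (f : τ → ℕ)) hab) j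
    simp only [toF, Finsupp.coe_equivFunOnFinite_symm] at this
    exact Fin.ext this
  set ψ : MvPolynomial τ ℝ := ∑ α, monomial (toF α) (c α) with hψ
  refine ⟨ψ, ?_, ?_⟩
  · intro h0
    apply hα₀
    have : coeff (toF α₀) ψ = c α₀ := by
      rw [hψ]
      rw [coeff_sum]  -- check name
      rw [Finset.sum_eq_single α₀]
      · rw [coeff_monomial, if_pos rfl]
      · intro b _ hb
        rw [coeff_monomial, if_neg]
        intro hh
        exact hb (htoFinj hh)
      · intro hmem; exact absurd (Finset.mem_univ α₀) hmem
    rw [h0, coeff_zero] at this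
    exact this.symm
  · rw [hψ, map_sum]
    rw [← hsum]
    apply Finset.sum_congr rfl
    intro α _
    rw [aeval_monomial]
    rw [Finsupp.prod_fintype]
    · simp [Algebra.smul_def, toF, hv]
    · intro j; exact pow_zero _

lemma apply_le_degsum {n : ℕ} (s : Fin n →₀ ℕ) (i : Fin n) : s i ≤ s.sum fun _ e => e := by
  by_cases h : i ∈ s.support
  · exact Finset.single_le_sum (fun _ _ => Nat.zero_le _) h
  · simp [Finsupp.notMem_support_iff.mp h]

instance degFintype (n B : ℕ) : Fintype {s : Fin n →₀ ℕ // (s.sum fun _ e => e) ≤ B} :=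
  Fintype.ofInjective
    (fun s (i : Fin n) => (⟨s.1 i, Nat.lt_succ_of_le ((apply_le_degsum s.1 i).trans s.2)⟩ :
      Fin (B + 1)))
    (by
      intro a b hab
      apply Subtype.ext
      apply Finsupp.ext
      intro i
      have := congrFun hab i
      simpa [Fin.ext_iff] using this)

/-- `x^s` as a real number. -/
def pw {n : ℕ} (x : Fin n → ℝ) (s : Fin n →₀ ℕ) : ℝ := ∏ i, x i ^ s i

lemma pw_zero {n : ℕ} (x : Fin n → ℝ) : pw x 0 = 1 := by simp [pw]

lemma pw_single {n : ℕ} (x : Fin n → ℝ) (i : Fin n) : pw x (Finsupp.single i 1) = x i := by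
  rw [pw, Finset.prod_eq_single i]
  · simp
  · intro j _ hj
    rw [Finsupp.single_apply, if_neg (fun h => hj h.symm), pow_zero]
  · intro h; exact absurd (Finset.mem_univ i) h

lemma eval_eq_sum_pw {n : ℕ} (x : Fin n → ℝ) (p : MvPolynomial (Fin n) ℝ) :
    eval x p = ∑ s ∈ p.support, coeff s p * pw x s :=
  eval_eq' x p

lemma eval_pderiv_eq {n : ℕ} (x : Fin n → ℝ) (p : MvPolynomial (Fin n) ℝ) (i : Fin n) :
    eval x (pderiv i p) =
      ∑ s ∈ p.support, coeff s p * ((s i : ℝ) * pw x (s - Finsupp.single i 1)) := by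
  conv_lhs => rw [← support_sum_monomial_coeff p]
  rw [map_sum, map_sum]
  apply Finset.sum_congr rfl
  intro s _
  rw [pderiv_monomial, eval_monomial, Finsupp.prod_fintype]
  · rw [pw]; ring
  · intro j; exact pow_zero _

lemma sum_deg_subtype_eq {n B : ℕ} (p : MvPolynomial (Fin n) ℝ) (hdeg : p.totalDegree ≤ B)
    (w : (Fin n →₀ ℕ) → ℝ) :
    ∑ s : {s : Fin n →₀ ℕ // (s.sum fun _ e => e) ≤ B}, coeff s.1 p * w s.1
      = ∑ s ∈ p.support, coeff s p * w s := by
  classical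
  have himg : ∑ s ∈ Finset.univ.image
        (Subtype.val : {s : Fin n →₀ ℕ // (s.sum fun _ e => e) ≤ B} → (Fin n →₀ ℕ)),
        coeff s p * w s
      = ∑ s : {s : Fin n →₀ ℕ // (s.sum fun _ e => e) ≤ B}, coeff s.1 p * w s.1 :=
    Finset.sum_image (fun a _ b _ h => Subtype.val_injective h)
  rw [← himg]
  apply (Finset.sum_subset ?_ ?_).symm
  · intro s hs
    exact Finset.mem_image.mpr ⟨⟨s, (le_totalDegree hs).trans hdeg⟩, Finset.mem_univ _, rfl⟩
  · intro s _ hs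
    rw [notMem_support_iff.mp hs, zero_mul]

section Case

variable (n m : ℕ) (d : Fin m → ℕ)

abbrev Idx (n m : ℕ) (d : Fin m → ℕ) : Type :=
  Σ j : Fin m, {s : Fin n →₀ ℕ // (s.sum fun _ e => e) ≤ d j}

def e0 (j : Fin m) : Idx n m d := ⟨j, ⟨0, by simp⟩⟩

def e1 (hd : ∀ j, 0 < d j) (j : Fin m) (i : Fin n) : Idx n m d :=
  ⟨j, ⟨Finsupp.single i 1, by rw [Finsupp.sum_single_index rfl]; exact hd j⟩⟩

/-- second projection -/
def val2 (q : Idx n m d) : Fin n →₀ ℕ := q.2.1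

@[simp] lemma e0_fst (j : Fin m) : (e0 n m d j).1 = j := rfl
@[simp] lemma e0_val2 (j : Fin m) : val2 n m d (e0 n m d j) = 0 := rfl
@[simp] lemma e1_fst (hd : ∀ j, 0 < d j) (j : Fin m) (i : Fin n) : (e1 n m d hd j i).1 = j := rfl
@[simp] lemma e1_val2 (hd : ∀ j, 0 < d j) (j : Fin m) (i : Fin n) :
    val2 n m d (e1 n m d hd j i) = Finsupp.single i 1 := rfl
@[simp] lemma e0_snd (j : Fin m) : ((e0 n m d j).2 : Fin n →₀ ℕ) = 0 := rfl
@[simp] lemma e1_snd (hd : ∀ j, 0 < d j) (j : Fin m) (i : Fin n) :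
    ((e1 n m d hd j i).2 : Fin n →₀ ℕ) = Finsupp.single i 1 := rfl

variable (hd : ∀ j, 0 < d j) (j0 : Fin m) (S : Finset (Fin m))

def Dset : Finset (Idx n m d) :=
  insert (e0 n m d j0)
    ((Finset.univ.image fun i => e1 n m d hd j0 i) ∪ S.image (fun j => e0 n m d j))

abbrev Pty : Type :=
  (Fin n) ⊕ (({j : Fin m // j ∈ S}) ⊕ {p : Idx n m d // p ∉ Dset n m d hd j0 S})

def Xv (i : Fin n) : MvPolynomial (Pty n m d hd j0 S) ℝ := X (Sum.inl i)
def Lv (j : {j : Fin m // j ∈ S}) : MvPolynomial (Pty n m d hd j0 S) ℝ := X (Sum.inr (Sum.inl j))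
def Cv (p : {p : Idx n m d // p ∉ Dset n m d hd j0 S}) : MvPolynomial (Pty n m d hd j0 S) ℝ :=
  X (Sum.inr (Sum.inr p))

def mono (s : Fin n →₀ ℕ) : MvPolynomial (Pty n m d hd j0 S) ℝ :=
  ∏ i, (Xv n m d hd j0 S i) ^ (s i)

def GE (j : Fin m) : MvPolynomial (Pty n m d hd j0 S) ℝ :=
  ∑ p : {p : Idx n m d // p ∉ Dset n m d hd j0 S},
    if p.1.1 = j then Cv n m d hd j0 S p * mono n m d hd j0 S p.1.2.1 else 0

def GD (j : Fin m) (i : Fin n) : MvPolynomial (Pty n m d hd j0 S) ℝ :=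
  ∑ p : {p : Idx n m d // p ∉ Dset n m d hd j0 S},
    if p.1.1 = j then
      (p.1.2.1 i : ℝ) •
        (Cv n m d hd j0 S p * mono n m d hd j0 S (p.1.2.1 - Finsupp.single i 1))
    else 0

def Ap (i : Fin n) : MvPolynomial (Pty n m d hd j0 S) ℝ :=
  -(GD n m d hd j0 S j0 i + ∑ j : {j : Fin m // j ∈ S}, Lv n m d hd j0 S j * GD n m d hd j0 S j.1 i)

def B0 : MvPolynomial (Pty n m d hd j0 S) ℝ :=
  -(GE n m d hd j0 S j0 + ∑ i, Ap n m d hd j0 S i * Xv n m d hd j0 S i)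

def Bj (j : Fin m) : MvPolynomial (Pty n m d hd j0 S) ℝ := -(GE n m d hd j0 S j)

def Fp (p : Idx n m d) : MvPolynomial (Pty n m d hd j0 S) ℝ :=
  if hD : p ∈ Dset n m d hd j0 S then
    (if p.1 = j0 then
      (if p.2.1 = 0 then B0 n m d hd j0 S
       else ∑ i, if p.2.1 = Finsupp.single i 1 then Ap n m d hd j0 S i else 0)
     else Bj n m d hd j0 S p.1)
  else Cv n m d hd j0 S ⟨p, hD⟩

lemma e0_ne_e1 (hj0S : j0 ∉ S) (i : Fin n) : e0 n m d j0 ≠ e1 n m d hd j0 i := by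
  intro h
  have := congrArg (val2 n m d) h
  simp only [e0_val2, e1_val2] at this
  exact one_ne_zero (Finsupp.single_eq_zero.mp this.symm)

lemma e1_inj : Function.Injective (e1 n m d hd j0) := by
  intro a b hab
  have := congrArg (val2 n m d) hab
  simp only [e1_val2] at this
  exact Finsupp.single_left_injective one_ne_zero this

lemma e0_inj : Function.Injective (e0 n m d) := by
  intro a b hab
  exact congrArg Sigma.fst hab

lemma Dsum (hj0S : j0 ∉ S) (h : Idx n m d → ℝ) :
    ∑ q ∈ Dset n m d hd j0 S, h q
      = h (e0 n m d j0) + ((∑ i, h (e1 n m d hd j0 i)) + ∑ j ∈ S, h (e0 n m d j)) := by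
  classical
  rw [Dset, Finset.sum_insert, Finset.sum_union, Finset.sum_image, Finset.sum_image]
  · intro a _ b _ hab; exact e0_inj n m d hab
  · intro a _ b _ hab; exact e1_inj n m d hd j0 hab
  · rw [Finset.disjoint_left]
    intro q hq1 hq2
    obtain ⟨i, _, rfl⟩ := Finset.mem_image.mp hq1
    obtain ⟨j, hj, hj2⟩ := Finset.mem_image.mp hq2
    have := congrArg Sigma.fst hj2
    simp only [e0_fst, e1_fst] at this
    exact hj0S (this ▸ hj)
  · intro hmem
    rcases Finset.mem_union.mp hmem with h1 | h1
    · obtain ⟨i, _, hi⟩ := Finset.mem_image.mp h1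
      exact e0_ne_e1 n m d hd j0 S hj0S i hi.symm
    · obtain ⟨j, hj, hj2⟩ := Finset.mem_image.mp h1
      have := congrArg Sigma.fst hj2
      simp only [e0_fst] at this
      exact hj0S (this ▸ hj)

lemma card_Pty_lt (hj0S : j0 ∉ S) :
    Fintype.card (Pty n m d hd j0 S) < Fintype.card (Idx n m d) := by
  classical
  have hD : (Dset n m d hd j0 S).card = 1 + (n + S.card) := by
    have hdisj : Disjoint (Finset.univ.image fun i => e1 n m d hd j0 i)
        (S.image (fun j => e0 n m d j)) := by
      rw [Finset.disjoint_left]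
      intro q hq1 hq2
      obtain ⟨i, _, rfl⟩ := Finset.mem_image.mp hq1
      obtain ⟨j, hj, hj2⟩ := Finset.mem_image.mp hq2
      have := congrArg Sigma.fst hj2
      simp only [e0_fst, e1_fst] at this
      exact hj0S (this ▸ hj)
    have hni : e0 n m d j0 ∉
        (Finset.univ.image fun i => e1 n m d hd j0 i) ∪ S.image (fun j => e0 n m d j) := by
      intro hmem
      rcases Finset.mem_union.mp hmem with h1 | h1
      · obtain ⟨i, _, hi⟩ := Finset.mem_image.mp h1
        exact e0_ne_e1 n m d hd j0 S hj0S i hi.symm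
      · obtain ⟨j, hj, hj2⟩ := Finset.mem_image.mp h1
        have := congrArg Sigma.fst hj2
        simp only [e0_fst] at this
        exact hj0S (this ▸ hj)
    rw [Dset, Finset.card_insert_of_notMem hni, Finset.card_union_of_disjoint hdisj,
      Finset.card_image_of_injective _ (e1_inj n m d hd j0),
      Finset.card_image_of_injective _ (e0_inj n m d), Finset.card_univ, Fintype.card_fin]
    omega
  have hDle : (Dset n m d hd j0 S).card ≤ Fintype.card (Idx n m d) := Finset.card_le_univ _
  have hfree : Fintype.card {p : Idx n m d // p ∉ Dset n m d hd j0 S}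
      = Fintype.card (Idx n m d) - (Dset n m d hd j0 S).card := by
    rw [Fintype.card_subtype_compl, Fintype.card_coe]
  have hS : Fintype.card {j : Fin m // j ∈ S} = S.card := Fintype.card_coe _
  have : Fintype.card (Pty n m d hd j0 S)
      = n + (S.card + (Fintype.card (Idx n m d) - (Dset n m d hd j0 S).card)) := by
    rw [Fintype.card_sum, Fintype.card_sum, Fintype.card_fin, hS, hfree]
  omega

section Eval

variable (g : Fin m → MvPolynomial (Fin n) ℝ) (x : Fin n → ℝ) (lam : Fin m → ℝ)

def yy : Pty n m d hd j0 S → ℝ :=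
  Sum.elim x (Sum.elim (fun j => lam j.1) (fun p => coeff p.1.2.1 (g p.1.1)))

@[simp] lemma eval_Xv (i : Fin n) :
    eval (yy n m d hd j0 S g x lam) (Xv n m d hd j0 S i) = x i := by
  rw [Xv, eval_X]; rfl

@[simp] lemma eval_Lv (j : {j : Fin m // j ∈ S}) :
    eval (yy n m d hd j0 S g x lam) (Lv n m d hd j0 S j) = lam j.1 := by
  rw [Lv, eval_X]; rfl

@[simp] lemma eval_Cv (p : {p : Idx n m d // p ∉ Dset n m d hd j0 S}) :
    eval (yy n m d hd j0 S g x lam) (Cv n m d hd j0 S p) = coeff p.1.2.1 (g p.1.1) := by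
  rw [Cv, eval_X]; rfl

@[simp] lemma eval_mono (s : Fin n →₀ ℕ) :
    eval (yy n m d hd j0 S g x lam) (mono n m d hd j0 S s) = pw x s := by
  rw [mono, map_prod, pw]
  apply Finset.prod_congr rfl
  intro i _
  rw [map_pow, eval_Xv]

lemma sum_split (h : Idx n m d → ℝ) :
    ∑ q : Idx n m d, h q
      = ∑ q ∈ Dset n m d hd j0 S, h q + ∑ p : {p : Idx n m d // p ∉ Dset n m d hd j0 S}, h p.1 := by
  classical
  rw [← Finset.sum_compl_add_sum (Dset n m d hd j0 S) h, add_comm]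
  congr 1
  rw [Finset.sum_subtype ((Dset n m d hd j0 S)ᶜ) (fun q => Finset.mem_compl) h]

lemma sum_sigma_eval (j : Fin m) (hdeg : (g j).totalDegree ≤ d j) (w : (Fin n →₀ ℕ) → ℝ) :
    ∑ q : Idx n m d, (if q.1 = j then coeff q.2.1 (g j) * w q.2.1 else 0)
      = ∑ s ∈ (g j).support, coeff s (g j) * w s := by
  classical
  rw [← Finset.univ_sigma_univ, Finset.sum_sigma]
  have h1 : ∀ j' : Fin m,
      (∑ s : {s : Fin n →₀ ℕ // (s.sum fun _ e => e) ≤ d j'},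
        if (⟨j', s⟩ : Idx n m d).1 = j then coeff (⟨j', s⟩ : Idx n m d).2.1 (g j) * w s.1 else 0)
      = if j' = j then
          (∑ s : {s : Fin n →₀ ℕ // (s.sum fun _ e => e) ≤ d j'}, coeff s.1 (g j) * w s.1)
        else 0 := by
    intro j'
    by_cases hj : j' = j
    · rw [if_pos hj]
      apply Finset.sum_congr rfl
      intro s _
      rw [if_pos hj]
    · rw [if_neg hj]
      apply Finset.sum_eq_zero
      intro s _
      rw [if_neg hj]
  calc ∑ j' : Fin m, ∑ s : {s : Fin n →₀ ℕ // (s.sum fun _ e => e) ≤ d j'},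
        (if (⟨j', s⟩ : Idx n m d).1 = j then coeff (⟨j', s⟩ : Idx n m d).2.1 (g j) * w s.1 else 0)
      = ∑ j' : Fin m, if j' = j then
          (∑ s : {s : Fin n →₀ ℕ // (s.sum fun _ e => e) ≤ d j'}, coeff s.1 (g j) * w s.1)
        else 0 := Finset.sum_congr rfl (fun j' _ => h1 j')
    _ = ∑ s : {s : Fin n →₀ ℕ // (s.sum fun _ e => e) ≤ d j}, coeff s.1 (g j) * w s.1 := by
        rw [Finset.sum_ite_eq' Finset.univ j
          (fun j' => ∑ s : {s : Fin n →₀ ℕ // (s.sum fun _ e => e) ≤ d j'},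
            coeff s.1 (g j) * w s.1), if_pos (Finset.mem_univ j)]
    _ = ∑ s ∈ (g j).support, coeff s (g j) * w s := sum_deg_subtype_eq (g j) hdeg w

lemma eval_GE (j : Fin m) (hdeg : (g j).totalDegree ≤ d j) :
    eval (yy n m d hd j0 S g x lam) (GE n m d hd j0 S j)
      = eval x (g j)
        - ∑ q ∈ Dset n m d hd j0 S,
            (if q.1 = j then coeff q.2.1 (g j) * pw x q.2.1 else 0) := by
  classical
  have hterm : ∀ p : {p : Idx n m d // p ∉ Dset n m d hd j0 S},
      eval (yy n m d hd j0 S g x lam)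
        (if p.1.1 = j then Cv n m d hd j0 S p * mono n m d hd j0 S p.1.2.1 else 0)
      = (if p.1.1 = j then coeff p.1.2.1 (g j) * pw x p.1.2.1 else 0) := by
    intro p
    by_cases hp : p.1.1 = j
    · rw [if_pos hp, if_pos hp, map_mul, eval_Cv, eval_mono, congrArg g hp]
    · rw [if_neg hp, if_neg hp, map_zero]
  rw [GE, map_sum, Finset.sum_congr rfl (fun p _ => hterm p)]
  have := sum_split n m d hd j0 S (fun q => if q.1 = j then coeff q.2.1 (g j) * pw x q.2.1 else 0)
  rw [sum_sigma_eval n m d g j hdeg (fun s => pw x s), ← eval_eq_sum_pw] at this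
  linarith [this]

lemma eval_GD (j : Fin m) (i : Fin n) (hdeg : (g j).totalDegree ≤ d j) :
    eval (yy n m d hd j0 S g x lam) (GD n m d hd j0 S j i)
      = eval x (pderiv i (g j))
        - ∑ q ∈ Dset n m d hd j0 S,
            (if q.1 = j then
              coeff q.2.1 (g j) * ((q.2.1 i : ℝ) * pw x (q.2.1 - Finsupp.single i 1)) else 0) := by
  classical
  have hterm : ∀ p : {p : Idx n m d // p ∉ Dset n m d hd j0 S},
      eval (yy n m d hd j0 S g x lam)
        (if p.1.1 = j then
          (p.1.2.1 i : ℝ) •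
            (Cv n m d hd j0 S p * mono n m d hd j0 S (p.1.2.1 - Finsupp.single i 1)) else 0)
      = (if p.1.1 = j then
          coeff p.1.2.1 (g j) * ((p.1.2.1 i : ℝ) * pw x (p.1.2.1 - Finsupp.single i 1)) else 0)
      := by
    intro p
    by_cases hp : p.1.1 = j
    · rw [if_pos hp, if_pos hp, smul_eq_C_mul, map_mul, map_mul, eval_C, eval_Cv, eval_mono,
        congrArg g hp]
      ring
    · rw [if_neg hp, if_neg hp, map_zero]
  rw [GD, map_sum, Finset.sum_congr rfl (fun p _ => hterm p)]
  have := sum_split n m d hd j0 S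
    (fun q => if q.1 = j then
      coeff q.2.1 (g j) * ((q.2.1 i : ℝ) * pw x (q.2.1 - Finsupp.single i 1)) else 0)
  rw [sum_sigma_eval n m d g j hdeg
    (fun s => (s i : ℝ) * pw x (s - Finsupp.single i 1)), ← eval_pderiv_eq] at this
  linarith [this]

lemma eval_GE_S (hj0S : j0 ∉ S) (j : Fin m) (hj : j ∈ S) (hdeg : (g j).totalDegree ≤ d j)
    (hz : eval x (g j) = 0) :
    eval (yy n m d hd j0 S g x lam) (GE n m d hd j0 S j) = - coeff 0 (g j) := by
  classical
  rw [eval_GE n m d hd j0 S g x lam j hdeg, hz,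
    Dsum n m d hd j0 S hj0S (fun q => if q.1 = j then coeff q.2.1 (g j) * pw x q.2.1 else 0)]
  have hjj0 : ¬ (j0 = j) := fun h => hj0S (h ▸ hj)
  simp only [e0_fst, e0_snd, e1_fst, e1_snd]
  erw [if_neg hjj0, Finset.sum_eq_zero (fun (i : Fin n) _ => if_neg hjj0),
    Finset.sum_ite_eq' S j (fun _ => coeff 0 (g j) * pw x 0), if_pos hj, pw_zero]
  ring

lemma eval_GE_j0 (hj0S : j0 ∉ S) (hdeg : (g j0).totalDegree ≤ d j0)
    (hz : eval x (g j0) = 0) :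
    eval (yy n m d hd j0 S g x lam) (GE n m d hd j0 S j0)
      = - coeff 0 (g j0) - ∑ i, coeff (Finsupp.single i 1) (g j0) * x i := by
  classical
  rw [eval_GE n m d hd j0 S g x lam j0 hdeg, hz,
    Dsum n m d hd j0 S hj0S (fun q => if q.1 = j0 then coeff q.2.1 (g j0) * pw x q.2.1 else 0)]
  simp only [e0_fst, e0_snd, e1_fst, e1_snd, eq_self_iff_true, if_true]
  erw [Finset.sum_eq_zero
    (fun (j' : Fin m) (hj' : j' ∈ S) => if_neg (fun h : j' = j0 => hj0S (h ▸ hj'))), pw_zero]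
  have h2 : (∑ i, coeff (Finsupp.single i 1) (g j0) * pw x (Finsupp.single i 1))
      = ∑ i, coeff (Finsupp.single i 1) (g j0) * x i := by
    apply Finset.sum_congr rfl
    intro i _
    rw [pw_single]
  rw [h2]
  ring

lemma eval_GD_S (hj0S : j0 ∉ S) (j : Fin m) (hj : j ∈ S) (i : Fin n)
    (hdeg : (g j).totalDegree ≤ d j) :
    eval (yy n m d hd j0 S g x lam) (GD n m d hd j0 S j i) = eval x (pderiv i (g j)) := by
  classical
  rw [eval_GD n m d hd j0 S g x lam j i hdeg,
    Dsum n m d hd j0 S hj0S (fun q => if q.1 = j then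
      coeff q.2.1 (g j) * ((q.2.1 i : ℝ) * pw x (q.2.1 - Finsupp.single i 1)) else 0)]
  have hjj0 : ¬ (j0 = j) := fun h => hj0S (h ▸ hj)
  simp only [e0_fst, e0_snd, e1_fst, e1_snd]
  erw [if_neg hjj0, Finset.sum_eq_zero (fun (i' : Fin n) _ => if_neg hjj0)]
  have h3 : (∑ j' ∈ S, if j' = j then
      coeff 0 (g j) * (((0 : Fin n →₀ ℕ) i : ℝ) * pw x ((0 : Fin n →₀ ℕ) - Finsupp.single i 1))
      else 0) = 0 := by
    apply Finset.sum_eq_zero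
    intro j' _
    by_cases h : j' = j
    · rw [if_pos h]
      simp
    · rw [if_neg h]
  erw [h3]
  ring

lemma eval_GD_j0 (hj0S : j0 ∉ S) (i : Fin n) (hdeg : (g j0).totalDegree ≤ d j0) :
    eval (yy n m d hd j0 S g x lam) (GD n m d hd j0 S j0 i)
      = eval x (pderiv i (g j0)) - coeff (Finsupp.single i 1) (g j0) := by
  classical
  rw [eval_GD n m d hd j0 S g x lam j0 i hdeg,
    Dsum n m d hd j0 S hj0S (fun q => if q.1 = j0 then
      coeff q.2.1 (g j0) * ((q.2.1 i : ℝ) * pw x (q.2.1 - Finsupp.single i 1)) else 0)]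
  simp only [e0_fst, e0_snd, e1_fst, e1_snd, eq_self_iff_true, if_true]
  erw [Finset.sum_eq_zero
    (fun (j' : Fin m) (hj' : j' ∈ S) => if_neg (fun h : j' = j0 => hj0S (h ▸ hj')))]
  have h1 : coeff 0 (g j0) * (((0 : Fin n →₀ ℕ) i : ℝ) *
      pw x ((0 : Fin n →₀ ℕ) - Finsupp.single i 1)) = 0 := by simp
  have h2 : (∑ i', coeff (Finsupp.single i' 1) (g j0) *
      (((Finsupp.single i' 1 : Fin n →₀ ℕ) i : ℝ) * pw x (Finsupp.single i' 1 - Finsupp.single i 1)))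
      = coeff (Finsupp.single i 1) (g j0) := by
    rw [Finset.sum_eq_single i]
    · rw [Finsupp.single_eq_same, tsub_self, pw_zero]
      norm_num
    · intro i' _ hi'
      rw [Finsupp.single_apply, if_neg hi']
      norm_num
    · intro h; exact absurd (Finset.mem_univ i) h
  rw [h1, h2]
  ring

lemma eval_Ap (hj0S : j0 ∉ S) (i : Fin n) (hdeg : ∀ j, (g j).totalDegree ≤ d j)
    (hlam1 : lam j0 = 1) (hlam0 : ∀ j, j ≠ j0 → j ∉ S → lam j = 0)
    (hgrad : ∑ j, lam j * eval x (pderiv i (g j)) = 0) :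
    eval (yy n m d hd j0 S g x lam) (Ap n m d hd j0 S i)
      = coeff (Finsupp.single i 1) (g j0) := by
  classical
  have hsplit : ∑ j, lam j * eval x (pderiv i (g j))
      = lam j0 * eval x (pderiv i (g j0)) + ∑ j ∈ S, lam j * eval x (pderiv i (g j)) := by
    rw [← Finset.sum_insert (f := fun j => lam j * eval x (pderiv i (g j))) hj0S]
    apply (Finset.sum_subset (Finset.subset_univ _) ?_).symm
    intro j _ hj
    rw [hlam0 j (fun h => hj (h ▸ Finset.mem_insert_self j0 S))
      (fun h => hj (Finset.mem_insert_of_mem h)), zero_mul]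
  have hsub : ∑ j : {j : Fin m // j ∈ S},
      lam j.1 * eval (yy n m d hd j0 S g x lam) (GD n m d hd j0 S j.1 i)
      = ∑ j ∈ S, lam j * eval x (pderiv i (g j)) := by
    rw [← Finset.sum_subtype S (fun j => Iff.rfl)
      (fun j => lam j * eval (yy n m d hd j0 S g x lam) (GD n m d hd j0 S j i))]
    apply Finset.sum_congr rfl
    intro j hj
    rw [eval_GD_S n m d hd j0 S g x lam hj0S j hj i (hdeg j)]
  rw [Ap, map_neg, map_add, map_sum]
  have hterm : ∀ j : {j : Fin m // j ∈ S},
      eval (yy n m d hd j0 S g x lam) (Lv n m d hd j0 S j * GD n m d hd j0 S j.1 i)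
      = lam j.1 * eval (yy n m d hd j0 S g x lam) (GD n m d hd j0 S j.1 i) := by
    intro j
    rw [map_mul, eval_Lv]
  rw [Finset.sum_congr rfl (fun j _ => hterm j), hsub,
    eval_GD_j0 n m d hd j0 S g x lam hj0S i (hdeg j0)]
  rw [hsplit, hlam1] at hgrad
  linarith [hgrad]

lemma eval_B0 (hj0S : j0 ∉ S) (hdeg : ∀ j, (g j).totalDegree ≤ d j)
    (hlam1 : lam j0 = 1) (hlam0 : ∀ j, j ≠ j0 → j ∉ S → lam j = 0)
    (hgrad : ∀ i, ∑ j, lam j * eval x (pderiv i (g j)) = 0)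
    (hz : eval x (g j0) = 0) :
    eval (yy n m d hd j0 S g x lam) (B0 n m d hd j0 S) = coeff 0 (g j0) := by
  classical
  rw [B0, map_neg, map_add, map_sum]
  have hterm : ∀ i : Fin n,
      eval (yy n m d hd j0 S g x lam) (Ap n m d hd j0 S i * Xv n m d hd j0 S i)
      = coeff (Finsupp.single i 1) (g j0) * x i := by
    intro i
    rw [map_mul, eval_Xv, eval_Ap n m d hd j0 S g x lam hj0S i hdeg hlam1 hlam0 (hgrad i)]
  rw [Finset.sum_congr rfl (fun i _ => hterm i),
    eval_GE_j0 n m d hd j0 S g x lam hj0S (hdeg j0) hz]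
  ring

lemma eval_Bj (hj0S : j0 ∉ S) (j : Fin m) (hj : j ∈ S) (hdeg : (g j).totalDegree ≤ d j)
    (hz : eval x (g j) = 0) :
    eval (yy n m d hd j0 S g x lam) (Bj n m d hd j0 S j) = coeff 0 (g j) := by
  rw [Bj, map_neg, eval_GE_S n m d hd j0 S g x lam hj0S j hj hdeg hz]
  ring

lemma eval_Fp (hj0S : j0 ∉ S) (hdeg : ∀ j, (g j).totalDegree ≤ d j)
    (hlam1 : lam j0 = 1) (hlam0 : ∀ j, j ≠ j0 → j ∉ S → lam j = 0)
    (hgrad : ∀ i, ∑ j, lam j * eval x (pderiv i (g j)) = 0)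
    (hz : ∀ j ∈ insert j0 S, eval x (g j) = 0) (p : Idx n m d) :
    eval (yy n m d hd j0 S g x lam) (Fp n m d hd j0 S p) = coeff p.2.1 (g p.1) := by
  classical
  rw [Fp]
  by_cases hD : p ∈ Dset n m d hd j0 S
  · rw [dif_pos hD]
    rcases Finset.mem_insert.mp hD with hp | hp
    · subst hp
      simp only [e0_fst, e0_snd, eq_self_iff_true, if_true]
      exact eval_B0 n m d hd j0 S g x lam hj0S hdeg hlam1 hlam0 hgrad
        (hz j0 (Finset.mem_insert_self j0 S))
    · rcases Finset.mem_union.mp hp with hp1 | hp1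
      · obtain ⟨i, _, rfl⟩ := Finset.mem_image.mp hp1
        simp only [e1_fst, e1_snd, eq_self_iff_true, if_true]
        erw [if_neg (fun h => one_ne_zero (Finsupp.single_eq_zero.mp h))]
        rw [map_sum]
        have hterm : ∀ i' : Fin n,
            eval (yy n m d hd j0 S g x lam)
              (if (Finsupp.single i 1 : Fin n →₀ ℕ) = Finsupp.single i' 1 then
                Ap n m d hd j0 S i' else 0)
            = if (Finsupp.single i 1 : Fin n →₀ ℕ) = Finsupp.single i' 1 then
                coeff (Finsupp.single i' 1) (g j0) else 0 := by
          intro i'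
          by_cases h : (Finsupp.single i 1 : Fin n →₀ ℕ) = Finsupp.single i' 1
          · rw [if_pos h, if_pos h,
              eval_Ap n m d hd j0 S g x lam hj0S i' hdeg hlam1 hlam0 (hgrad i')]
          · rw [if_neg h, if_neg h, map_zero]
        erw [Finset.sum_congr rfl (fun i' _ => hterm i'), Finset.sum_eq_single i]
        · rw [if_pos rfl]
        · intro i' _ hi'
          rw [if_neg (fun h => hi' (Finsupp.single_left_injective one_ne_zero h).symm)]
        · intro h; exact absurd (Finset.mem_univ i) h
      · obtain ⟨j, hj, rfl⟩ := Finset.mem_image.mp hp1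
        simp only [e0_fst, e0_snd]
        rw [if_neg (fun h : j = j0 => hj0S (h ▸ hj))]
        exact eval_Bj n m d hd j0 S g x lam hj0S j hj (hdeg j)
          (hz j (Finset.mem_insert_of_mem hj))
  · rw [dif_neg hD, eval_Cv]

lemma case_psi (hd0 : ∀ j, 0 < d j) (hj0S : j0 ∉ S) :
    ∃ ψ : MvPolynomial (Idx n m d) ℝ, ψ ≠ 0 ∧
      ∀ (g : Fin m → MvPolynomial (Fin n) ℝ) (x : Fin n → ℝ) (lam : Fin m → ℝ),
        (∀ j, (g j).totalDegree ≤ d j) → lam j0 = 1 →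
        (∀ j, j ≠ j0 → j ∉ S → lam j = 0) →
        (∀ i, ∑ j, lam j * eval x (pderiv i (g j)) = 0) →
        (∀ j ∈ insert j0 S, eval x (g j) = 0) →
        eval (fun p : Idx n m d => coeff p.2.1 (g p.1)) ψ = 0 := by
  classical
  obtain ⟨ψ, hψ0, hψ⟩ := exists_annihilator (card_Pty_lt n m d hd0 j0 S hj0S)
    (Fp n m d hd0 j0 S)
  refine ⟨ψ, hψ0, ?_⟩
  intro g x lam hdeg h1 h0 hgrad hz
  have hfun : (fun p : Idx n m d => coeff p.2.1 (g p.1))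
      = fun p => eval (yy n m d hd0 j0 S g x lam) (Fp n m d hd0 j0 S p) :=
    funext fun p => (eval_Fp n m d hd0 j0 S g x lam hj0S hdeg h1 h0 hgrad hz p).symm
  rw [hfun, ← eval_aeval' (Fp n m d hd0 j0 S) (yy n m d hd0 j0 S g x lam) ψ, hψ, map_zero]

end Eval

end Case

/-- The set of critical points `C(g)`. -/
def Cset {n m : ℕ} (g : Fin m → MvPolynomial (Fin n) ℝ) : Set (Fin n → ℝ) :=
  {x | ∃ lam : Fin m → ℝ, lam ≠ 0 ∧
    (∀ i, ∑ j, lam j * eval x (pderiv i (g j)) = 0) ∧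
    (∀ j, lam j * eval x (g j) = 0)}

/-- **Genericity of the emptiness of `C(g)`.**  For given positive degrees `d 1, …, d m`
there is a nonzero polynomial `ψ` in the coefficients of tuples `(g 1, …, g m)` of
polynomials of degrees at most `d j` such that whenever `ψ` does not vanish at the
coefficients of such a tuple `g`, the set of critical points `C(g)` is empty.
The coefficient of the monomial `s` (with total degree at most `d j`) in `g j`
is recorded at the index `⟨j, s⟩`. -/
theorem generic_emptiness_of_critical_points (n m : ℕ) (d : Fin m → ℕ) (hd : ∀ j, 0 < d j) :
    ∃ ψ : MvPolynomial (Σ j : Fin m, {s : Fin n →₀ ℕ // (s.sum fun _ e => e) ≤ d j}) ℝ,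
      ψ ≠ 0 ∧
      ∀ g : Fin m → MvPolynomial (Fin n) ℝ, (∀ j, (g j).totalDegree ≤ d j) →
        eval (fun p => coeff p.2.1 (g p.1)) ψ ≠ 0 → Cset g = ∅ := by
  classical
  have H : ∀ q : Fin m × Finset (Fin m), ∃ ψ : MvPolynomial (Idx n m d) ℝ, ψ ≠ 0 ∧
      ∀ (g : Fin m → MvPolynomial (Fin n) ℝ) (x : Fin n → ℝ) (lam : Fin m → ℝ),
        (∀ j, (g j).totalDegree ≤ d j) → lam q.1 = 1 →
        (∀ j, j ≠ q.1 → j ∉ q.2.erase q.1 → lam j = 0) →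
        (∀ i, ∑ j, lam j * eval x (pderiv i (g j)) = 0) →
        (∀ j ∈ insert q.1 (q.2.erase q.1), eval x (g j) = 0) →
        eval (fun p : Idx n m d => coeff p.2.1 (g p.1)) ψ = 0 :=
    fun q => case_psi n m d q.1 (q.2.erase q.1) hd (Finset.notMem_erase q.1 q.2)
  choose Ψ h0 h1 using H
  refine ⟨∏ q, Ψ q, ?_, ?_⟩
  · rw [Finset.prod_ne_zero_iff]
    exact fun q _ => h0 q
  · intro g hdeg hne
    rw [Set.eq_empty_iff_forall_notMem]
    intro x hx
    obtain ⟨lam, hlam, hgrad, hprod⟩ := hx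
    obtain ⟨j0, hj0p⟩ := Function.ne_iff.mp hlam
    have hj0 : lam j0 ≠ 0 := by simpa using hj0p
    set S₀ : Finset (Fin m) := Finset.univ.filter (fun j => j ≠ j0 ∧ lam j ≠ 0) with hS₀
    set lam' : Fin m → ℝ := fun j => lam j / lam j0 with hlam'
    apply hne
    rw [map_prod]
    apply Finset.prod_eq_zero (Finset.mem_univ (j0, S₀))
    apply h1 (j0, S₀) g x lam' hdeg
    · exact div_self hj0
    · intro j hjj0 hjS
      have : j ∉ S₀ := by
        intro hj
        exact hjS (Finset.mem_erase.mpr ⟨hjj0, hj⟩)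
      rw [hS₀, Finset.mem_filter] at this
      push_neg at this
      have hlz : lam j = 0 := this (Finset.mem_univ j) hjj0
      show lam j / lam j0 = 0
      rw [hlz, zero_div]
    · intro i
      have : ∀ j, lam' j * eval x (pderiv i (g j))
          = lam j * eval x (pderiv i (g j)) / lam j0 := by
        intro j
        show lam j / lam j0 * _ = _
        ring
      rw [Finset.sum_congr rfl (fun j _ => this j), ← Finset.sum_div, hgrad i, zero_div]
    · intro j hj
      have hlj : lam j ≠ 0 := by
        rcases Finset.mem_insert.mp hj with h | h
        · exact h ▸ hj0
        · exact ((Finset.mem_filter.mp (Finset.mem_of_mem_erase h)).2).2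
      exact (mul_eq_zero.mp (hprod j)).resolve_left hlj
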